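/- Let (A, d_A) be a cochain complex over ℤ and χ : A → A[2] a chain map. Form the complex B with B^n = A^n ⊕ A^{n-1} and differential d_B(a, b) = (d_A a + χ b, −d_A b). Let B_q = B[q] (polynomials in a degree-2 variable q) with differential d_{B,q}(a,b) = (d_A a + χ b + q b, −d_A b). If χ + q·id : A[q] → A[q] is injective in each degree, then the inclusion A → B_q, a ↦ (a, 0) in q-degree 0, is a quasi-isomorphism. -/

import Mathlib

/- Statement 6: Let (A, d) be a cochain complex over ℤ and χ : A → A[2] a chain map.
Form B with Bⁿ = Aⁿ ⊕ Aⁿ⁻¹ and d_B(a,b) = (d a + χ b, −d b), and its q-deformation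
B_q = B[q] (q of degree 2) with d_{B,q}(a,b) = (d a + χ b + q b, −d b).
If χ + q·id : A[q] → A[q] is injective in each degree, then the inclusion
A → B_q, a ↦ (a,0) in q-degree 0, is a quasi-isomorphism.

B_q is realized in degree n as finitely supported families over j ∈ ℕ (the power of q)
with values in A^{n−2j} × A^{n−2j−1}; quasi-isomorphism is stated elementarily as
"bijective on cohomology". -/

/-- Transport along an equality of degrees, as an additive map. -/
def castHom (B : ℤ → Type) [∀ n, AddCommGroup (B n)] {m n : ℤ} (h : m = n) :
    B m →+ B n where
  toFun x := h ▸ x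
  map_zero' := by subst h; rfl
  map_add' := by subst h; intro x y; rfl

/-- Degree-`n` part of `A[q]`, with `q` of degree 2. -/
abbrev Aq (A : ℤ → Type) [∀ n, AddCommGroup (A n)] (n : ℤ) : Type :=
  Π₀ j : ℕ, A (n - 2 * (j : ℤ))

/-- Multiplication by `q` (degree 2) on `A[q]`. -/
noncomputable def qShift (A : ℤ → Type) [∀ n, AddCommGroup (A n)] (n : ℤ) :
    Aq A n →+ Aq A (n + 2) :=
  DFinsupp.sumAddHom fun j : ℕ =>
    (DFinsupp.singleAddHom (fun j : ℕ => A (n + 2 - 2 * (j : ℤ))) (j + 1)).comp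
      (castHom A (by push_cast; ring))

/-- The map `χ + q·id : A[q] → A[q]` of degree 2, in degree `n`. -/
noncomputable def chiq (A : ℤ → Type) [∀ n, AddCommGroup (A n)]
    (χ : ∀ m : ℤ, A m →+ A (m + 2)) (n : ℤ) : Aq A n →+ Aq A (n + 2) :=
  DFinsupp.mapRange.addMonoidHom
      (fun j : ℕ => (castHom A (by ring)).comp (χ (n - 2 * (j : ℤ))))
    + qShift A n

/-- Degree-`n` part of `B_q = B[q]`, where `Bⁿ = Aⁿ × Aⁿ⁻¹`. -/
abbrev Bq (A : ℤ → Type) [∀ n, AddCommGroup (A n)] (n : ℤ) : Type :=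
  Π₀ j : ℕ, (A (n - 2 * (j : ℤ)) × A (n - 2 * (j : ℤ) - 1))

/-- The differential `d_{B,q}(a, b) = (d a + χ b + q b, −d b)` on `B_q`. -/
noncomputable def dBq (A : ℤ → Type) [∀ n, AddCommGroup (A n)]
    (d : ∀ m : ℤ, A m →+ A (m + 1)) (χ : ∀ m : ℤ, A m →+ A (m + 2)) (n : ℤ) :
    Bq A n →+ Bq A (n + 1) :=
  DFinsupp.mapRange.addMonoidHom (fun j : ℕ =>
    AddMonoidHom.prod
      (((castHom A (by ring)).comp ((d (n - 2 * (j : ℤ))).comp (AddMonoidHom.fst _ _)))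
        + ((castHom A (by ring)).comp
            ((χ (n - 2 * (j : ℤ) - 1)).comp (AddMonoidHom.snd _ _))))
      (- ((castHom A (by ring)).comp
            ((d (n - 2 * (j : ℤ) - 1)).comp (AddMonoidHom.snd _ _)))))
  + DFinsupp.sumAddHom (fun j : ℕ =>
      (DFinsupp.singleAddHom
          (fun j : ℕ => (A (n + 1 - 2 * (j : ℤ)) × A (n + 1 - 2 * (j : ℤ) - 1))) (j + 1)).comp
        (AddMonoidHom.prod
          ((castHom A (by push_cast; ring)).comp (AddMonoidHom.snd _ _))
          0))

/-- A chain map `f : (X, dX) → (Y, dY)` is a quasi-isomorphism: it is bijective on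
cohomology in every degree (stated elementarily). -/
def IsQuasiIso (X Y : ℤ → Type) [∀ n, AddCommGroup (X n)] [∀ n, AddCommGroup (Y n)]
    (dX : ∀ n : ℤ, X n →+ X (n + 1)) (dY : ∀ n : ℤ, Y n →+ Y (n + 1))
    (f : ∀ n : ℤ, X n →+ Y n) : Prop :=
  ∀ n : ℤ,
    (∀ y : Y n, dY n y = 0 → ∃ x : X n, dX n x = 0 ∧
      ∃ z : Y (n - 1), f n x - y = castHom Y (by ring) (dY (n - 1) z)) ∧
    (∀ x : X n, dX n x = 0 →
      (∃ z : Y (n - 1), f n x = castHom Y (by ring) (dY (n - 1) z)) →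
      ∃ w : X (n - 1), x = castHom X (by ring) (dX (n - 1) w))

/-! ### Helper lemmas -/

section helpers
variable (A : ℤ → Type) [∀ n, AddCommGroup (A n)]

lemma castHom_castHom {m n k : ℤ} (h1 : m = n) (h2 : n = k) (x : A m) :
    castHom A h2 (castHom A h1 x) = castHom A (h1.trans h2) x := by subst h1; subst h2; rfl

lemma castHom_self {m : ℤ} (h : m = m) (x : A m) : castHom A h x = x := rfl

lemma castHom_eq_zero_iff {m n : ℤ} (h : m = n) (x : A m) :
    castHom A h x = 0 ↔ x = 0 := by subst h; exact Iff.rfl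

variable (d : ∀ m : ℤ, A m →+ A (m + 1)) (χ : ∀ m : ℤ, A m →+ A (m + 2))

lemma d_castHom {m n : ℤ} (h : m = n) (x : A m) :
    d n (castHom A h x) = castHom A (by rw [h]) (d m x) := by subst h; rfl

lemma χ_castHom {m n : ℤ} (h : m = n) (x : A m) :
    χ n (castHom A h x) = castHom A (by rw [h]) (χ m x) := by subst h; rfl

lemma castHom_Bq_apply {m n : ℤ} (h : m = n) (w : Bq A m) (j : ℕ) :
    castHom (Bq A) h w j
      = (castHom A (by rw [h]) (w j).1, castHom A (by rw [h]) (w j).2) := by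
  subst h; rfl

end helpers

section dfinsupp
variable (A : ℤ → Type) [∀ n, AddCommGroup (A n)]
  (d : ∀ m : ℤ, A m →+ A (m + 1)) (χ : ∀ m : ℤ, A m →+ A (m + 2))

noncomputable def bShift (n : ℤ) : Bq A n →+ Bq A (n+1) :=
  DFinsupp.sumAddHom (fun j : ℕ =>
      (DFinsupp.singleAddHom
          (fun j : ℕ => (A (n + 1 - 2 * (j : ℤ)) × A (n + 1 - 2 * (j : ℤ) - 1))) (j + 1)).comp
        (AddMonoidHom.prod
          ((castHom A (by push_cast; ring)).comp (AddMonoidHom.snd _ _))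
          0))

lemma bShift_single (n : ℤ) (i : ℕ) (x : A (n - 2*(i:ℤ)) × A (n - 2*(i:ℤ) - 1)) :
    bShift A n (DFinsupp.single i x) =
      DFinsupp.single (i+1) (castHom A (by push_cast; ring) x.2, 0) := by
  unfold bShift; rw [DFinsupp.sumAddHom_single]; rfl

lemma bShift_apply_zero (n : ℤ) (t : Bq A n) : bShift A n t 0 = 0 := by
  induction t using DFinsupp.induction with
  | h0 => simp
  | ha i b f h1 h2 ih =>
    rw [map_add, DFinsupp.add_apply, ih, bShift_single, add_zero,
      DFinsupp.single_eq_of_ne (Nat.succ_ne_zero i).symm]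

lemma bShift_apply_succ (n : ℤ) (t : Bq A n) (j : ℕ) :
    bShift A n t (j+1) = (castHom A (by push_cast; ring) (t j).2, 0) := by
  induction t using DFinsupp.induction with
  | h0 => simp; rfl
  | ha i b f h1 h2 ih =>
    rw [map_add, DFinsupp.add_apply, ih, bShift_single, DFinsupp.add_apply]
    rcases eq_or_ne i j with rfl | hij
    · rw [DFinsupp.single_eq_same, DFinsupp.single_eq_same]
      ext <;> simp
    · rw [DFinsupp.single_eq_of_ne hij.symm, DFinsupp.single_eq_of_ne (by omega : j+1 ≠ i+1)]
      simp

lemma dBq_apply (n : ℤ) (z : Bq A n) (j : ℕ) :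
    dBq A d χ n z j =
      (castHom A (by ring) (d _ (z j).1) + castHom A (by ring) (χ _ (z j).2),
        - castHom A (by ring) (d _ (z j).2)) + bShift A n z j := by
  unfold dBq bShift
  rw [AddMonoidHom.add_apply, DFinsupp.add_apply,
    DFinsupp.mapRange.addMonoidHom_apply, DFinsupp.mapRange_apply]
  rfl

lemma exists_bound {β : ℕ → Type} [∀ i, AddCommGroup (β i)] (y : Π₀ j, β j) :
    ∃ N : ℕ, ∀ j, N ≤ j → y j = 0 := by
  classical
  refine ⟨y.support.sup id + 1, fun j hj => ?_⟩
  by_contra h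
  have := Finset.le_sup (f := id) (DFinsupp.mem_support_iff.2 h)
  simp only [id] at this
  omega

noncomputable def ofBounded {β : ℕ → Type} [∀ i, Zero (β i)] (g : ∀ j, β j) (N : ℕ) :
    Π₀ j, β j := DFinsupp.mk (Finset.range N) fun j => g j

lemma ofBounded_apply {β : ℕ → Type} [∀ i, Zero (β i)] (g : ∀ j, β j) (N : ℕ)
    (hg : ∀ j, N ≤ j → g j = 0) (j : ℕ) : ofBounded g N j = g j := by
  rw [ofBounded, DFinsupp.mk_apply]
  split
  · rfl
  · rw [hg j (by simp only [Finset.mem_range] at *; omega)]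

end dfinsupp

noncomputable def vAux (A : ℤ → Type) [∀ n, AddCommGroup (A n)]
    (χ : ∀ m : ℤ, A m →+ A (m + 2)) (n : ℤ) (N : ℕ)
    (a : ∀ j : ℕ, A (n - 2 * (j : ℤ))) : ∀ j : ℕ, A (n - 2 * (j : ℤ) - 2)
  | j =>
    if N ≤ j then 0
    else - castHom A (by push_cast; ring) (a (j+1))
         - castHom A (by push_cast; ring) (χ _ (vAux A χ n N a (j+1)))
  termination_by j => N - j
  decreasing_by omega

section vaux
variable (A : ℤ → Type) [∀ n, AddCommGroup (A n)]
  (χ : ∀ m : ℤ, A m →+ A (m + 2))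

lemma vAux_ge (n : ℤ) (N : ℕ) (a : ∀ j : ℕ, A (n - 2 * (j : ℤ))) (j : ℕ) (h : N ≤ j) :
    vAux A χ n N a j = 0 := by
  rw [vAux, if_pos h]

lemma vAux_lt (n : ℤ) (N : ℕ) (a : ∀ j : ℕ, A (n - 2 * (j : ℤ))) (j : ℕ) (h : j < N) :
    vAux A χ n N a j =
      - castHom A (by push_cast; ring) (a (j+1))
      - castHom A (by push_cast; ring) (χ _ (vAux A χ n N a (j+1))) := by
  rw [vAux, if_neg (by omega)]

end vaux

lemma downward (N : ℕ) {P : ℕ → Prop} (h0 : ∀ j, N ≤ j → P j)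
    (hstep : ∀ j, j < N → P (j+1) → P j) : ∀ j, P j := by
  have key : ∀ k j, N ≤ j + k → P j := by
    intro k
    induction k with
    | zero => intro j h; exact h0 j (by omega)
    | succ k ih =>
      intro j h
      rcases le_or_gt N j with h' | h'
      · exact h0 j h'
      · exact hstep j h' (ih (j+1) (by omega))
  intro j; exact key N j (by omega)

lemma cancel_aux {G : Type} [AddCommGroup G] {X Y u w : G}
    (h1 : X + Y + u = 0) (h2 : X + Y + w = 0) : u = w := by
  have hu : u = -(X+Y) := by rw [eq_neg_iff_add_eq_zero, add_comm]; exact h1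
  have hw : w = -(X+Y) := by rw [eq_neg_iff_add_eq_zero, add_comm]; exact h2
  rw [hu, hw]

lemma neg_aux {G : Type} [AddCommGroup G] {X Y Z : G}
    (h : X + Y + Z = 0) : -X - Y = Z := by
  have : Z = -(X+Y) := by rw [eq_neg_iff_add_eq_zero, add_comm]; exact h
  rw [this]; abel

lemma cancel2 {G : Type} [AddCommGroup G] (X Y : G) : X + Y + (-X - Y) = 0 := by abel

noncomputable def cFun (A : ℤ → Type) [∀ n, AddCommGroup (A n)]
    (χ : ∀ m : ℤ, A m →+ A (m + 2)) (n : ℤ)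
    (a : ∀ j : ℕ, A (n - 2 * (j : ℤ))) (v : ∀ j : ℕ, A (n - 2 * (j : ℤ) - 2)) :
    ∀ j : ℕ, A (n - 2 * (j : ℤ))
  | 0 => a 0 + castHom A (by push_cast; ring) (χ _ (v 0))
  | (j+1) => a (j+1) + castHom A (by push_cast; ring) (χ _ (v (j+1)))
      + castHom A (by push_cast; ring) (v j)

section cfun
variable (A : ℤ → Type) [∀ n, AddCommGroup (A n)] (χ : ∀ m : ℤ, A m →+ A (m + 2))

lemma cFun_zero (n : ℤ) (a : ∀ j : ℕ, A (n - 2 * (j : ℤ)))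
    (v : ∀ j : ℕ, A (n - 2 * (j : ℤ) - 2)) :
    cFun A χ n a v 0 = a 0 + castHom A (by push_cast; ring) (χ _ (v 0)) := rfl

lemma cFun_succ (n : ℤ) (a : ∀ j : ℕ, A (n - 2 * (j : ℤ)))
    (v : ∀ j : ℕ, A (n - 2 * (j : ℤ) - 2)) (j : ℕ) :
    cFun A χ n a v (j+1) = a (j+1) + castHom A (by push_cast; ring) (χ _ (v (j+1)))
      + castHom A (by push_cast; ring) (v j) := rfl

end cfun

theorem stmt6 (A : ℤ → Type) [∀ n, AddCommGroup (A n)]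
    (d : ∀ m : ℤ, A m →+ A (m + 1))
    (hdd : ∀ (m : ℤ) (x : A m), d (m + 1) (d m x) = 0)
    (χ : ∀ m : ℤ, A m →+ A (m + 2))
    (hχ : ∀ (m : ℤ) (x : A m),
      castHom A (by ring : (m + 1) + 2 = (m + 2) + 1) (χ (m + 1) (d m x))
        = d (m + 2) (χ m x))
    (hinj : ∀ n : ℤ, Function.Injective (chiq A χ n)) :
    IsQuasiIso A (Bq A) d (dBq A d χ)
      (fun n =>
        (DFinsupp.singleAddHom
            (fun j : ℕ => (A (n - 2 * (j : ℤ)) × A (n - 2 * (j : ℤ) - 1))) 0).comp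
          ((AddMonoidHom.inl _ _).comp
            (castHom A (by push_cast; ring : n = n - 2 * ((0 : ℕ) : ℤ))))) := by
  intro n
  constructor
  · -- surjectivity on cohomology
    intro y hy
    obtain ⟨N, hN⟩ := exists_bound y
    have hy' : ∀ j, dBq A d χ n y j = 0 := fun j => by rw [hy]; rfl
    have R2 : ∀ j, d _ ((y j).2) = 0 := by
      intro j
      have h := hy' j
      cases j with
      | zero =>
        rw [dBq_apply, bShift_apply_zero, add_zero, Prod.mk_eq_zero] at h
        have h2 := h.2
        rwa [neg_eq_zero, castHom_eq_zero_iff] at h2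
      | succ j =>
        rw [dBq_apply, bShift_apply_succ, Prod.mk_add_mk, Prod.mk_eq_zero] at h
        have h2 := h.2
        rwa [add_zero, neg_eq_zero, castHom_eq_zero_iff] at h2
    have R10 : castHom A (by ring) (d (n - 2 * ((0:ℕ) : ℤ)) ((y 0).1))
        + castHom A (by ring) (χ (n - 2 * ((0:ℕ) : ℤ) - 1) ((y 0).2))
        = (0 : A (n + 1 - 2 * ((0:ℕ) : ℤ))) := by
      have h := hy' 0
      rw [dBq_apply, bShift_apply_zero, add_zero, Prod.mk_eq_zero] at h
      exact h.1
    have R1s : ∀ j : ℕ,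
        castHom A (by push_cast; ring) (d (n - 2 * ((j+1 : ℕ) : ℤ)) ((y (j+1)).1))
        + castHom A (by push_cast; ring) (χ (n - 2 * ((j+1 : ℕ) : ℤ) - 1) ((y (j+1)).2))
        + castHom A (by push_cast; ring) ((y j).2)
        = (0 : A (n + 1 - 2 * ((j+1 : ℕ) : ℤ))) := by
      intro j
      have h := hy' (j+1)
      rw [dBq_apply, bShift_apply_succ, Prod.mk_add_mk, Prod.mk_eq_zero] at h
      exact h.1
    obtain ⟨v, hvdef⟩ : ∃ t, t = vAux A χ n N (fun j => (y j).1) := ⟨_, rfl⟩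
    have hv : ∀ j : ℕ, d _ (v j) = castHom A (by ring) ((y j).2) := by
      refine downward N (fun j hj => ?_) (fun j hj ih => ?_)
      · rw [hvdef, vAux_ge A χ n N _ j hj, map_zero, hN j hj]
        simp only [Prod.snd_zero, map_zero]
      · rw [hvdef, vAux_lt A χ n N _ j hj, map_sub, map_neg, d_castHom A d,
          d_castHom A d, ← hχ, ← hvdef, ih, χ_castHom A χ]
        simp only [castHom_castHom, castHom_self]
        have h := congrArg (castHom A (by push_cast; ring :
          n + 1 - 2 * ((j+1 : ℕ) : ℤ) = n - 2 * (j : ℤ) - 2 + 1)) (R1s j)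
        simp only [map_add, map_zero, castHom_castHom, castHom_self] at h
        exact neg_aux h
    obtain ⟨c, hcdef⟩ : ∃ t, t = cFun A χ n (fun j => (y j).1) v := ⟨_, rfl⟩
    have hcb : ∀ j : ℕ, N + 1 ≤ j → c j = 0 := by
      intro j hj
      obtain ⟨j, rfl⟩ : ∃ j', j = j' + 1 := ⟨j - 1, by omega⟩
      rw [hcdef, cFun_succ, hN (j+1) (by omega), hvdef,
        vAux_ge A χ n N _ (j+1) (by omega), vAux_ge A χ n N _ j (by omega)]
      simp only [Prod.fst_zero, map_zero, add_zero, zero_add]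
    have hdc : ∀ j : ℕ, d _ (c j) = 0 := by
      intro j
      cases j with
      | zero =>
        rw [hcdef, cFun_zero, map_add, d_castHom A d, ← hχ, hv 0,
          χ_castHom A χ]
        simp only [castHom_castHom, castHom_self]
        have h := congrArg (castHom A (by push_cast; ring :
          n + 1 - 2 * ((0:ℕ) : ℤ) = n - 2 * ((0:ℕ) : ℤ) + 1)) R10
        simp only [map_add, map_zero, castHom_castHom, castHom_self] at h
        exact h
      | succ j =>
        rw [hcdef, cFun_succ, map_add, map_add, d_castHom A d, d_castHom A d,
          ← hχ, hv (j+1), hv j, χ_castHom A χ]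
        simp only [castHom_castHom, castHom_self]
        have h := congrArg (castHom A (by push_cast; ring :
          n + 1 - 2 * ((j+1 : ℕ) : ℤ) = n - 2 * ((j+1:ℕ) : ℤ) + 1)) (R1s j)
        simp only [map_add, map_zero, castHom_castHom, castHom_self] at h
        exact h
    obtain ⟨v', hv'def⟩ : ∃ t, t = vAux A χ n (N+1) c := ⟨_, rfl⟩
    have hdv' : ∀ j : ℕ, d _ (v' j) = 0 := by
      refine downward (N+1) (fun j hj => ?_) (fun j hj ih => ?_)
      · rw [hv'def, vAux_ge A χ n (N+1) _ j hj, map_zero]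
      · rw [hv'def, vAux_lt A χ n (N+1) _ j hj, map_sub, map_neg, d_castHom A d,
          d_castHom A d, ← hχ, ← hv'def, ih, hdc (j+1)]
        simp only [map_zero, neg_zero, sub_zero]
    have hclear : ∀ j : ℕ, c (j+1) + castHom A (by push_cast; ring) (χ _ (v' (j+1)))
        + castHom A (by push_cast; ring) (v' j) = (0 : A (n - 2 * ((j+1:ℕ) : ℤ))) := by
      intro j
      rcases lt_or_ge j (N+1) with hj | hj
      · rw [hv'def, vAux_lt A χ n (N+1) c j hj, map_sub, map_neg]
        simp only [castHom_castHom, castHom_self]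
        exact cancel2 _ _
      · rw [hv'def, vAux_ge A χ n (N+1) c (j+1) (by omega),
          vAux_ge A χ n (N+1) c j (by omega), hcb (j+1) (by omega)]
        simp only [map_zero, add_zero, zero_add]
    refine ⟨castHom A (by push_cast; ring)
        (c 0 + castHom A (by push_cast; ring) (χ _ (v' 0))), ?_, ?_⟩
    · rw [d_castHom A d, map_add, d_castHom A d, ← hχ, hdv' 0, hdc 0]
      simp only [map_zero, add_zero]
    · obtain ⟨zz, hzzdef⟩ : ∃ t : Bq A (n-1), t = ofBounded
          (fun j : ℕ => (((0 : A (n - 1 - 2 * (j:ℤ))),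
            castHom A (by push_cast; ring) (v j + v' j)) :
              A (n - 1 - 2 * (j:ℤ)) × A (n - 1 - 2 * (j:ℤ) - 1))) (N+1) := ⟨_, rfl⟩
      have hzz : ∀ j : ℕ, zz j = ((0 : A (n - 1 - 2 * (j:ℤ))),
          castHom A (by push_cast; ring) (v j + v' j)) := by
        intro j
        rw [hzzdef]
        refine ofBounded_apply _ _ (fun i hi => ?_) j
        rw [hvdef, hv'def, vAux_ge A χ n N _ i (by omega),
          vAux_ge A χ n (N+1) c i (by omega)]
        simp
      refine ⟨zz, DFinsupp.ext fun j => ?_⟩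
      rw [DFinsupp.sub_apply, castHom_Bq_apply, dBq_apply]
      simp only [AddMonoidHom.coe_comp, Function.comp_apply,
        DFinsupp.singleAddHom_apply, AddMonoidHom.inl_apply]
      cases j with
      | zero =>
        rw [DFinsupp.single_eq_same, Prod.ext_iff]
        simp only [hzz, bShift_apply_zero, add_zero, Prod.fst_sub, Prod.snd_sub,
          map_zero, zero_add, χ_castHom A χ, d_castHom A d, map_add, map_neg,
          castHom_castHom, castHom_self, hcdef, cFun_zero, hv, hdv', neg_zero,
          zero_sub]
        constructor
        · abel
        · trivial
      | succ j =>
        rw [DFinsupp.single_eq_of_ne (by omega : j+1 ≠ (0:ℕ)), Prod.ext_iff]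
        simp only [hzz, bShift_apply_succ, Prod.mk_add_mk, add_zero, Prod.fst_sub,
          Prod.snd_sub, map_zero, zero_add, χ_castHom A χ, d_castHom A d, map_add,
          map_neg, castHom_castHom, castHom_self, hv, hdv', neg_zero, zero_sub,
          Prod.fst_zero, Prod.snd_zero, Prod.fst_neg, Prod.snd_neg]
        constructor
        · have h := hclear j
          rw [hcdef, cFun_succ] at h
          linear_combination (norm := abel) -h
        · trivial
  · intro x hdx hex
    obtain ⟨z, hz⟩ := hex
    obtain ⟨N, hN⟩ := exists_bound z
    have E0 : castHom A (by push_cast; ring : n = n - 2 * ((0:ℕ) : ℤ)) x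
        = castHom A (by push_cast; ring) (d (n - 1 - 2 * ((0:ℕ) : ℤ)) ((z 0).1))
          + castHom A (by push_cast; ring) (χ (n - 1 - 2 * ((0:ℕ) : ℤ) - 1) ((z 0).2)) := by
      have h := congrArg (fun w => w 0) hz
      simp only [AddMonoidHom.coe_comp, Function.comp_apply, DFinsupp.singleAddHom_apply,
        AddMonoidHom.inl_apply, DFinsupp.single_eq_same, castHom_Bq_apply, dBq_apply,
        bShift_apply_zero, add_zero, Prod.ext_iff, map_add, castHom_castHom] at h
      exact h.1
    have Es : ∀ j : ℕ,
        castHom A (by push_cast; ring) (d (n - 1 - 2 * ((j+1:ℕ) : ℤ)) ((z (j+1)).1))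
        + castHom A (by push_cast; ring) (χ (n - 1 - 2 * ((j+1:ℕ) : ℤ) - 1) ((z (j+1)).2))
        + castHom A (by push_cast; ring) ((z j).2)
        = (0 : A (n - 2 * ((j+1:ℕ) : ℤ))) := by
      intro j
      have h := congrArg (fun w => w (j+1)) hz
      simp only [AddMonoidHom.coe_comp, Function.comp_apply, DFinsupp.singleAddHom_apply,
        AddMonoidHom.inl_apply, DFinsupp.single_eq_of_ne (by omega : (0:ℕ) ≠ j+1),
        castHom_Bq_apply, dBq_apply, bShift_apply_succ, Prod.mk_add_mk, add_zero,
        Prod.ext_iff, Prod.fst_zero, Prod.snd_zero, map_add, castHom_castHom] at h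
      exact h.1.symm
    obtain ⟨v', hv'def⟩ : ∃ t, t = vAux A χ (n-1) N (fun j => (z j).1) := ⟨_, rfl⟩
    have hstar : ∀ j : ℕ,
        castHom A (by push_cast; ring) ((z (j+1)).1)
        + castHom A (by push_cast; ring) (χ _ (v' (j+1))) + v' j
        = (0 : A (n - 1 - 2 * (j : ℤ) - 2)) := by
      intro j
      rcases lt_or_ge j N with hj | hj
      · rw [hv'def, vAux_lt A χ (n-1) N _ j hj]
        exact cancel2 _ _
      · rw [hv'def, vAux_ge A χ (n-1) N _ (j+1) (by omega),
          vAux_ge A χ (n-1) N _ j (by omega), hN (j+1) (by omega)]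
        simp
    have ht : ∀ j : ℕ, (z j).2
        = castHom A (by ring) (d (n - 1 - 2 * (j : ℤ) - 2) (v' j)) := by
      refine downward N (fun j hj => ?_) (fun j hj ih => ?_)
      · rw [hN j hj, hv'def, vAux_ge A χ (n-1) N _ j hj, map_zero, map_zero]
        rfl
      · have h1 := congrArg (castHom A (by push_cast; ring :
          n - 2 * ((j+1:ℕ) : ℤ) = n - 1 - 2 * (j : ℤ) - 1)) (Es j)
        rw [ih] at h1
        simp only [χ_castHom A χ, map_add, map_zero, castHom_castHom, castHom_self] at h1
        have h2 := congrArg (d _) (hstar j)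
        simp only [map_add, map_zero, d_castHom A d, ← hχ] at h2
        have h2' := congrArg (castHom A (by push_cast; ring :
          n - 1 - 2 * (j : ℤ) - 2 + 1 = n - 1 - 2 * (j : ℤ) - 1)) h2
        simp only [map_add, map_zero, castHom_castHom, castHom_self] at h2'
        exact cancel_aux h1 h2'
    refine ⟨castHom A (by push_cast; ring)
        ((z 0).1 + castHom A (by push_cast; ring) (χ _ (v' 0))), ?_⟩
    have h := congrArg (castHom A (by push_cast; ring :
      n - 2 * ((0:ℕ) : ℤ) = n)) E0
    rw [ht 0] at h
    simp only [χ_castHom A χ, map_add, castHom_castHom, castHom_self] at h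
    rw [d_castHom A d, map_add, d_castHom A d, ← hχ]
    simp only [χ_castHom A χ, map_add, castHom_castHom, castHom_self]
    exact h
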